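/- Multipartite parity norm bound (Proposition 2.1): Under the stated setup, the operator norm of B satisfies ‖B‖² ≤ m + ∑_{1 ≤ i < j ≤ m} φ^{(n)}_{ij}. -/

import Mathlib

open scoped BigOperators ComplexOrder

namespace Parity

variable {n : ℕ} {d : Fin n → ℕ}

/-- Kronecker product of `n` matrices, as a matrix over the product index set. -/
def kron (a : ∀ r : Fin n, Matrix (Fin (d r)) (Fin (d r)) ℂ) :
    Matrix (∀ r, Fin (d r)) (∀ r, Fin (d r)) ℂ :=
  fun i j => ∏ r, a r (i r) (j r)

/-- The ℓ²-operator norm of a complex matrix. -/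
noncomputable def opNorm {I : Type*} [Fintype I] [DecidableEq I] (A : Matrix I I ℂ) : ℝ :=
  ‖Matrix.toEuclideanCLM (𝕜 := ℂ) A‖

/-- The defect weight φ⁽ⁿ⁾ᵢⱼ. -/
noncomputable def phi {m : ℕ} (a : ∀ r : Fin n, Fin m → Matrix (Fin (d r)) (Fin (d r)) ℂ)
    (i j : Fin m) : ℝ :=
  (2 : ℝ) ^ ((1 : ℤ) - n) *
    ∑ S ∈ Finset.univ.filter (fun S : Finset (Fin n) => Even S.card),
      (∏ r ∈ S, opNorm (a r i * a r j - a r j * a r i)) *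
        (∏ r ∈ Sᶜ, opNorm (a r i * a r j + a r j * a r i))

/-- A state: positive semidefinite with trace one. -/
def IsState {I : Type*} [Fintype I] (ρ : Matrix I I ℂ) : Prop :=
  ρ.PosSemidef ∧ ρ.trace = 1

/-- The trace norm `Tr √(AᴴA)`. -/
noncomputable def traceNorm {I : Type*} [Fintype I] [DecidableEq I] (A : Matrix I I ℂ) : ℝ :=
  (((Matrix.posSemidef_conjTranspose_mul_self A).1.eigenvectorUnitary : Matrix I I ℂ) *
      Matrix.diagonal ((fun x : ℝ => (x : ℂ)) ∘ (√·) ∘ (Matrix.posSemidef_conjTranspose_mul_self A).1.eigenvalues) *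
      (star (Matrix.posSemidef_conjTranspose_mul_self A).1.eigenvectorUnitary : Matrix I I ℂ)).trace.re

/-- Logarithm of a Hermitian matrix via the functional calculus (junk value otherwise);
an eigenvalue `0` contributes `Real.log 0 = 0`. -/
noncomputable def mlog {I : Type*} [Fintype I] [DecidableEq I] (A : Matrix I I ℂ) :
    Matrix I I ℂ :=
  if hA : A.IsHermitian then
    (hA.eigenvectorUnitary : Matrix I I ℂ) *
      Matrix.diagonal (fun i => (Real.log (hA.eigenvalues i) : ℂ)) *
      (star hA.eigenvectorUnitary : Matrix I I ℂ)
  else 0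

/-- Quantum relative entropy `D(ρ‖σ) = Tr(ρ (log ρ − log σ))` (natural logarithm). -/
noncomputable def relEntropy {I : Type*} [Fintype I] [DecidableEq I] (ρ σ : Matrix I I ℂ) : ℝ :=
  (Matrix.trace (ρ * (mlog ρ - mlog σ))).re

/-- The `r`-th marginal (partial trace over all other factors). -/
noncomputable def marginal (ρ : Matrix (∀ r, Fin (d r)) (∀ r, Fin (d r)) ℂ) (r : Fin n) :
    Matrix (Fin (d r)) (Fin (d r)) ℂ :=
  fun a b => ∑ k : ∀ s, Fin (d s), if k r = a then ρ k (Function.update k r b) else 0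

/-- Total correlation `I_tot(ρ) = D(ρ‖ρ₁ ⊗ ⋯ ⊗ ρₙ)`. -/
noncomputable def Itot (ρ : Matrix (∀ r, Fin (d r)) (∀ r, Fin (d r)) ℂ) : ℝ :=
  relEntropy ρ (kron (fun r => marginal ρ r))

/-- The set of product states. -/
def ProdStates (d : Fin n → ℕ) : Set (Matrix (∀ r, Fin (d r)) (∀ r, Fin (d r)) ℂ) :=
  {σ | ∃ s : ∀ r : Fin n, Matrix (Fin (d r)) (Fin (d r)) ℂ,
    (∀ r, IsState (s r)) ∧ σ = kron s}

/-- The product threshold `Γ_prod(B)`. -/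
noncomputable def Gamma (d : Fin n → ℕ) (B : Matrix (∀ r, Fin (d r)) (∀ r, Fin (d r)) ℂ) : ℝ :=
  sSup {x : ℝ | ∃ σ ∈ ProdStates d, x = (Matrix.trace (σ * B)).re}

/-- The excess `Δ_B(ρ)`. -/
noncomputable def excess (d : Fin n → ℕ) (B ρ : Matrix (∀ r, Fin (d r)) (∀ r, Fin (d r)) ℂ) : ℝ :=
  max ((Matrix.trace (ρ * B)).re - Gamma d B) 0


/-! ### Auxiliary lemmas for Proposition 2.1 -/

section Aux

open scoped Matrix.Norms.L2Operator Kronecker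
open Matrix Finset

lemma opNorm_eq {I : Type*} [Fintype I] [DecidableEq I] (A : Matrix I I ℂ) :
    opNorm A = ‖A‖ := (Matrix.cstar_norm_def A).symm

lemma opNorm_nonneg {I : Type*} [Fintype I] [DecidableEq I] (A : Matrix I I ℂ) :
    0 ≤ opNorm A := norm_nonneg _

lemma opNorm_mul_le {I : Type*} [Fintype I] [DecidableEq I] (A B : Matrix I I ℂ) :
    opNorm (A * B) ≤ opNorm A * opNorm B := by
  simp only [opNorm_eq]; exact Matrix.l2_opNorm_mul A B

lemma opNorm_add_le {I : Type*} [Fintype I] [DecidableEq I] (A B : Matrix I I ℂ) :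
    opNorm (A + B) ≤ opNorm A + opNorm B := by
  simp only [opNorm_eq]; exact norm_add_le A B

lemma opNorm_sum_le {I : Type*} [Fintype I] [DecidableEq I] {α : Type*} (s : Finset α)
    (f : α → Matrix I I ℂ) :
    opNorm (∑ i ∈ s, f i) ≤ ∑ i ∈ s, opNorm (f i) := by
  simp only [opNorm_eq]; exact norm_sum_le s f

lemma opNorm_smul {I : Type*} [Fintype I] [DecidableEq I] (z : ℂ) (A : Matrix I I ℂ) :
    opNorm (z • A) = ‖z‖ * opNorm A := by
  simp only [opNorm_eq]; exact norm_smul z A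

lemma opNorm_mul_self {I : Type*} [Fintype I] [DecidableEq I] (A : Matrix I I ℂ)
    (hA : Aᴴ = A) : opNorm (A * A) = opNorm A ^ 2 := by
  simp only [opNorm_eq]
  calc ‖A * A‖ = ‖Aᴴ * A‖ := by rw [hA]
  _ = ‖A‖ * ‖A‖ := Matrix.l2_opNorm_conjTranspose_mul_self A
  _ = ‖A‖ ^ 2 := (sq ‖A‖).symm

lemma sum_sq_mulVec_le {I : Type*} [Fintype I] [DecidableEq I] (A : Matrix I I ℂ) (x : I → ℂ) :
    ∑ i, ‖(A *ᵥ x) i‖ ^ 2 ≤ opNorm A ^ 2 * ∑ i, ‖x i‖ ^ 2 := by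
  have h := (Matrix.toEuclideanCLM (𝕜 := ℂ) A).le_opNorm ((WithLp.equiv 2 (I → ℂ)).symm x)
  rw [WithLp.equiv_symm_apply, Matrix.toEuclideanCLM_toLp, EuclideanSpace.norm_eq, EuclideanSpace.norm_eq] at h
  simp only [PiLp.toLp_apply] at h
  have h1 : (0:ℝ) ≤ ∑ i, ‖(A *ᵥ x) i‖ ^ 2 := Finset.sum_nonneg fun i _ => sq_nonneg _
  have h2 : (0:ℝ) ≤ ∑ i, ‖x i‖ ^ 2 := Finset.sum_nonneg fun i _ => sq_nonneg _
  calc ∑ i, ‖(A *ᵥ x) i‖ ^ 2 = Real.sqrt (∑ i, ‖(A *ᵥ x) i‖ ^ 2) ^ 2 := (Real.sq_sqrt h1).symm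
  _ ≤ (opNorm A * Real.sqrt (∑ i, ‖x i‖ ^ 2)) ^ 2 := by
      apply pow_le_pow_left₀ (Real.sqrt_nonneg _) h
  _ = opNorm A ^ 2 * ∑ i, ‖x i‖ ^ 2 := by
      rw [mul_pow, Real.sq_sqrt h2]

lemma opNorm_le_of_sq {I : Type*} [Fintype I] [DecidableEq I] (A : Matrix I I ℂ) {c : ℝ}
    (hc : 0 ≤ c)
    (h : ∀ x : I → ℂ, ∑ i, ‖(A *ᵥ x) i‖ ^ 2 ≤ c ^ 2 * ∑ i, ‖x i‖ ^ 2) : opNorm A ≤ c := by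
  refine ContinuousLinearMap.opNorm_le_bound _ hc fun y => ?_
  have hy : y = (WithLp.equiv 2 (I → ℂ)).symm (WithLp.equiv 2 (I → ℂ) y) := rfl
  rw [hy, WithLp.equiv_symm_apply, Matrix.toEuclideanCLM_toLp, EuclideanSpace.norm_eq, EuclideanSpace.norm_eq]
  simp only [PiLp.toLp_apply]
  calc Real.sqrt (∑ i, ‖(A *ᵥ WithLp.equiv 2 (I → ℂ) y) i‖ ^ 2)
      ≤ Real.sqrt (c ^ 2 * ∑ i, ‖(WithLp.equiv 2 (I → ℂ) y) i‖ ^ 2) := Real.sqrt_le_sqrt (h _)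
  _ = c * Real.sqrt (∑ i, ‖(WithLp.equiv 2 (I → ℂ) y) i‖ ^ 2) := by
      rw [Real.sqrt_mul (sq_nonneg c), Real.sqrt_sq hc]

lemma opNorm_reindex_le {I J : Type*} [Fintype I] [DecidableEq I] [Fintype J] [DecidableEq J]
    (e : J ≃ I) (A : Matrix J J ℂ) :
    opNorm (Matrix.reindex e e A) ≤ opNorm A := by
  refine opNorm_le_of_sq _ (opNorm_nonneg A) fun x => ?_
  have key : ∀ i : I, ((Matrix.reindex e e A) *ᵥ x) i = (A *ᵥ (x ∘ e)) (e.symm i) := by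
    intro i
    simp only [Matrix.mulVec, Matrix.reindex_apply, Matrix.submatrix_apply, dotProduct,
      Function.comp_apply]
    exact Fintype.sum_equiv e.symm (fun j => A (e.symm i) (e.symm j) * x j)
      (fun j => A (e.symm i) j * x (e j)) (fun j => by simp)
  calc ∑ i, ‖((Matrix.reindex e e A) *ᵥ x) i‖ ^ 2
      = ∑ i, ‖(A *ᵥ (x ∘ e)) (e.symm i)‖ ^ 2 := by
        exact Finset.sum_congr rfl fun i _ => by rw [key]
  _ = ∑ j, ‖(A *ᵥ (x ∘ e)) j‖ ^ 2 :=
        Fintype.sum_equiv e.symm _ _ fun i => rfl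
  _ ≤ opNorm A ^ 2 * ∑ j, ‖(x ∘ e) j‖ ^ 2 := sum_sq_mulVec_le A (x ∘ e)
  _ = opNorm A ^ 2 * ∑ i, ‖x i‖ ^ 2 := by
        congr 1
        exact Fintype.sum_equiv e (fun j => ‖x (e j)‖ ^ 2) (fun i => ‖x i‖ ^ 2) fun j => rfl

lemma opNorm_kronecker_one {I J : Type*} [Fintype I] [DecidableEq I] [Fintype J] [DecidableEq J]
    (A : Matrix I I ℂ) :
    opNorm (A ⊗ₖ (1 : Matrix J J ℂ)) ≤ opNorm A := by
  refine opNorm_le_of_sq _ (opNorm_nonneg A) fun x => ?_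
  have key : ∀ (i : I) (k : J), ((A ⊗ₖ (1 : Matrix J J ℂ)) *ᵥ x) (i, k)
      = (A *ᵥ fun j => x (j, k)) i := by
    intro i k
    simp only [Matrix.mulVec, dotProduct, Fintype.sum_prod_type, Matrix.kroneckerMap_apply,
      Matrix.one_apply, mul_ite, mul_one, mul_zero, ite_mul, zero_mul]
    exact Finset.sum_congr rfl fun j _ => by rw [Finset.sum_ite_eq]; simp
  calc ∑ p : I × J, ‖((A ⊗ₖ (1 : Matrix J J ℂ)) *ᵥ x) p‖ ^ 2
      = ∑ k : J, ∑ i : I, ‖(A *ᵥ fun j => x (j, k)) i‖ ^ 2 := by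
        rw [Fintype.sum_prod_type, Finset.sum_comm]
        exact Finset.sum_congr rfl fun k _ => Finset.sum_congr rfl fun i _ => by rw [key]
  _ ≤ ∑ k : J, opNorm A ^ 2 * ∑ j, ‖x (j, k)‖ ^ 2 :=
        Finset.sum_le_sum fun k _ => sum_sq_mulVec_le A _
  _ = opNorm A ^ 2 * ∑ p : I × J, ‖x p‖ ^ 2 := by
        rw [← Finset.mul_sum, Fintype.sum_prod_type, Finset.sum_comm]

lemma opNorm_one_kronecker {I J : Type*} [Fintype I] [DecidableEq I] [Fintype J] [DecidableEq J]
    (B : Matrix J J ℂ) :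
    opNorm ((1 : Matrix I I ℂ) ⊗ₖ B) ≤ opNorm B := by
  refine opNorm_le_of_sq _ (opNorm_nonneg B) fun x => ?_
  have key : ∀ (i : I) (k : J), (((1 : Matrix I I ℂ) ⊗ₖ B) *ᵥ x) (i, k)
      = (B *ᵥ fun l => x (i, l)) k := by
    intro i k
    simp only [Matrix.mulVec, dotProduct, Fintype.sum_prod_type, Matrix.kroneckerMap_apply,
      Matrix.one_apply, ite_mul, one_mul, zero_mul]
    rw [Finset.sum_comm]
    exact Finset.sum_congr rfl fun l _ => by rw [Finset.sum_ite_eq]; simp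
  calc ∑ p : I × J, ‖(((1 : Matrix I I ℂ) ⊗ₖ B) *ᵥ x) p‖ ^ 2
      = ∑ i : I, ∑ k : J, ‖(B *ᵥ fun l => x (i, l)) k‖ ^ 2 := by
        rw [Fintype.sum_prod_type]
        exact Finset.sum_congr rfl fun i _ => Finset.sum_congr rfl fun k _ => by rw [key]
  _ ≤ ∑ i : I, opNorm B ^ 2 * ∑ l, ‖x (i, l)‖ ^ 2 :=
        Finset.sum_le_sum fun i _ => sum_sq_mulVec_le B _
  _ = opNorm B ^ 2 * ∑ p : I × J, ‖x p‖ ^ 2 := by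
        rw [← Finset.mul_sum, Fintype.sum_prod_type]

lemma opNorm_kronecker_le {I J : Type*} [Fintype I] [DecidableEq I] [Fintype J] [DecidableEq J]
    (A : Matrix I I ℂ) (B : Matrix J J ℂ) :
    opNorm (A ⊗ₖ B) ≤ opNorm A * opNorm B := by
  have h : A ⊗ₖ B = (A ⊗ₖ (1 : Matrix J J ℂ)) * ((1 : Matrix I I ℂ) ⊗ₖ B) := by
    rw [← Matrix.mul_kronecker_mul, mul_one, one_mul]
  rw [h]
  exact le_trans (opNorm_mul_le _ _)
    (mul_le_mul (opNorm_kronecker_one A) (opNorm_one_kronecker B) (opNorm_nonneg _)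
      (opNorm_nonneg _))

lemma kron_mul (a b : ∀ r : Fin n, Matrix (Fin (d r)) (Fin (d r)) ℂ) :
    kron a * kron b = kron (fun r => a r * b r) := by
  ext i j
  simp only [Matrix.mul_apply, kron]
  calc ∑ k : ∀ r, Fin (d r), (∏ r, a r (i r) (k r)) * ∏ r, b r (k r) (j r)
      = ∑ k : ∀ r, Fin (d r), ∏ r, (a r (i r) (k r) * b r (k r) (j r)) := by
        exact Finset.sum_congr rfl fun k _ => (Finset.prod_mul_distrib).symm
  _ = ∏ r, ∑ kr, a r (i r) kr * b r kr (j r) :=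
        (Fintype.prod_sum fun r kr => a r (i r) kr * b r kr (j r)).symm

lemma kron_conjTranspose (a : ∀ r : Fin n, Matrix (Fin (d r)) (Fin (d r)) ℂ) :
    (kron a)ᴴ = kron (fun r => (a r)ᴴ) := by
  ext i j
  simp only [kron, Matrix.conjTranspose_apply, Matrix.star_apply]
  rw [star_prod]

lemma opNorm_kron_le : ∀ {n : ℕ} {d : Fin n → ℕ}
    (a : ∀ r : Fin n, Matrix (Fin (d r)) (Fin (d r)) ℂ),
    opNorm (kron a) ≤ ∏ r, opNorm (a r) := by
  intro n
  induction n with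
  | zero =>
    intro d a
    have h1 : kron a = 1 := by
      ext i j
      have : i = j := Subsingleton.elim i j
      simp [kron, this, Matrix.one_apply]
    rw [h1, Finset.univ_eq_empty, Finset.prod_empty]
    refine opNorm_le_of_sq _ zero_le_one fun x => ?_
    simp [Matrix.one_mulVec]
  | succ n ih =>
    intro d a
    set e := Fin.consEquiv (fun r => Fin (d r)) with he
    have hk : kron a = Matrix.reindex e e ((a 0) ⊗ₖ kron (fun r : Fin n => a r.succ)) := by
      ext i j
      simp only [Matrix.reindex_apply, Matrix.submatrix_apply, Matrix.kroneckerMap_apply, kron,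
        he, Fin.consEquiv, Equiv.coe_fn_symm_mk, Fin.tail]
      rw [Fin.prod_univ_succ]
    rw [hk, Fin.prod_univ_succ]
    refine le_trans (opNorm_reindex_le _ _) (le_trans (opNorm_kronecker_le _ _) ?_)
    exact mul_le_mul_of_nonneg_left (ih _) (opNorm_nonneg _)

lemma pair_bound {m : ℕ} (a : ∀ r : Fin n, Fin m → Matrix (Fin (d r)) (Fin (d r)) ℂ)
    (i j : Fin m) :
    opNorm (kron (fun r => a r i * a r j) + kron (fun r => a r j * a r i)) ≤ phi a i j := by
  set p : ∀ r : Fin n, Matrix (Fin (d r)) (Fin (d r)) ℂ := fun r => a r i * a r j with hp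
  set q : ∀ r : Fin n, Matrix (Fin (d r)) (Fin (d r)) ℂ := fun r => a r j * a r i with hq
  set s : ∀ r : Fin n, Matrix (Fin (d r)) (Fin (d r)) ℂ := fun r => p r + q r with hs
  set c : ∀ r : Fin n, Matrix (Fin (d r)) (Fin (d r)) ℂ := fun r => p r - q r with hc
  set mix : Finset (Fin n) → ∀ r : Fin n, Matrix (Fin (d r)) (Fin (d r)) ℂ :=
    fun t r => if r ∈ t then c r else s r with hmix
  have expand : (2 : ℂ) ^ n • (kron p + kron q)
      = ∑ t : Finset (Fin n), ((1 + (-1) ^ t.card : ℂ)) • kron (mix t) := by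
    ext i' j'
    simp only [Matrix.smul_apply, Matrix.add_apply, Matrix.sum_apply, smul_eq_mul, kron]
    have mixent : ∀ t : Finset (Fin n),
        (∏ r, mix t r (i' r) (j' r))
          = (∏ r ∈ t, c r (i' r) (j' r)) * ∏ r ∈ tᶜ, s r (i' r) (j' r) := by
      intro t
      rw [← Finset.prod_mul_prod_compl t (fun r => mix t r (i' r) (j' r))]
      congr 1
      · exact Finset.prod_congr rfl fun r hr => by simp [hmix, hr]
      · exact Finset.prod_congr rfl fun r hr => by
          simp only [Finset.mem_compl] at hr
          simp [hmix, hr]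
    have h1 : ∏ r, ((c r + s r) (i' r) (j' r))
        = ∑ t : Finset (Fin n), (∏ r ∈ t, c r (i' r) (j' r)) * ∏ r ∈ tᶜ, s r (i' r) (j' r) := by
      simpa using Fintype.prod_add (fun r => c r (i' r) (j' r)) (fun r => s r (i' r) (j' r))
    have h2 : ∏ r, ((s r - c r) (i' r) (j' r))
        = ∑ t : Finset (Fin n), ((-1 : ℂ) ^ t.card)
            * ((∏ r ∈ t, c r (i' r) (j' r)) * ∏ r ∈ tᶜ, s r (i' r) (j' r)) := by
      have : ∀ r, (s r - c r) (i' r) (j' r) = (-(c r (i' r) (j' r))) + s r (i' r) (j' r) := by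
        intro r; simp [Matrix.sub_apply, Matrix.add_apply]; ring
      rw [Finset.prod_congr rfl fun r _ => this r]
      rw [Fintype.prod_add (fun r => -(c r (i' r) (j' r))) (fun r => s r (i' r) (j' r))]
      refine Finset.sum_congr rfl fun t _ => ?_
      rw [← Finset.prod_const (-1 : ℂ), ← mul_assoc, ← Finset.prod_mul_distrib]
      congr 1
      exact Finset.prod_congr rfl fun r _ => by ring
    have hpc : ∀ r, (2 : ℂ) • p r = c r + s r := by
      intro r; rw [two_smul]; simp only [hc, hs]; abel
    have hqc : ∀ r, (2 : ℂ) • q r = s r - c r := by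
      intro r; rw [two_smul]; simp only [hc, hs]; abel
    have lhs1 : (2 : ℂ) ^ n * (∏ r, p r (i' r) (j' r))
        = ∏ r, ((c r + s r) (i' r) (j' r)) := by
      rw [← Finset.prod_congr rfl fun (r : Fin n) _ => congrFun (congrFun (hpc r) (i' r)) (j' r)]
      simp only [Matrix.smul_apply, smul_eq_mul, Finset.prod_mul_distrib, Finset.prod_const,
        Finset.card_univ, Fintype.card_fin]
    have lhs2 : (2 : ℂ) ^ n * (∏ r, q r (i' r) (j' r))
        = ∏ r, ((s r - c r) (i' r) (j' r)) := by
      rw [← Finset.prod_congr rfl fun (r : Fin n) _ => congrFun (congrFun (hqc r) (i' r)) (j' r)]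
      simp only [Matrix.smul_apply, smul_eq_mul, Finset.prod_mul_distrib, Finset.prod_const,
        Finset.card_univ, Fintype.card_fin]
    calc (2:ℂ)^n * ((∏ r, p r (i' r) (j' r)) + ∏ r, q r (i' r) (j' r))
        = (∏ r, ((c r + s r) (i' r) (j' r))) + ∏ r, ((s r - c r) (i' r) (j' r)) := by
          rw [mul_add, lhs1, lhs2]
    _ = ∑ t : Finset (Fin n), (1 + (-1 : ℂ) ^ t.card)
          * ((∏ r ∈ t, c r (i' r) (j' r)) * ∏ r ∈ tᶜ, s r (i' r) (j' r)) := by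
        rw [h1, h2, ← Finset.sum_add_distrib]
        exact Finset.sum_congr rfl fun t _ => by ring
    _ = ∑ t : Finset (Fin n), (1 + (-1 : ℂ) ^ t.card) * ∏ r, mix t r (i' r) (j' r) := by
        exact Finset.sum_congr rfl fun t _ => by rw [mixent]
  have h2n : ((2:ℂ)^n) ≠ 0 := pow_ne_zero _ two_ne_zero
  have keq : kron p + kron q = ((2:ℂ)^n)⁻¹ •
      ∑ t : Finset (Fin n), ((1 + (-1) ^ t.card : ℂ)) • kron (mix t) := by
    rw [← expand, inv_smul_smul₀ h2n]
  have filt : ∑ t : Finset (Fin n), ((1 + (-1) ^ t.card : ℂ)) • kron (mix t)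
      = ∑ t ∈ Finset.univ.filter (fun t : Finset (Fin n) => Even t.card),
          (2:ℂ) • kron (mix t) := by
    rw [Finset.sum_filter]
    refine Finset.sum_congr rfl fun t _ => ?_
    by_cases h : Even t.card
    · rw [if_pos h, Even.neg_one_pow h]; norm_num
    · rw [if_neg h, Odd.neg_one_pow (Nat.not_even_iff_odd.mp h)]; norm_num
  rw [keq, filt, opNorm_smul]
  have mixnorm : ∀ t : Finset (Fin n), ∏ r, opNorm (mix t r)
      = (∏ r ∈ t, opNorm (c r)) * ∏ r ∈ tᶜ, opNorm (s r) := by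
    intro t
    have h1 : ∏ r ∈ t, opNorm (mix t r) = ∏ r ∈ t, opNorm (c r) :=
      Finset.prod_congr rfl fun r hr => by simp [hmix, hr]
    have h2 : ∏ r ∈ tᶜ, opNorm (mix t r) = ∏ r ∈ tᶜ, opNorm (s r) :=
      Finset.prod_congr rfl fun r hr => by
        simp only [Finset.mem_compl] at hr
        simp [hmix, hr]
    rw [← Finset.prod_mul_prod_compl t (fun r => opNorm (mix t r)), h1, h2]
  have step : opNorm (∑ t ∈ Finset.univ.filter (fun t : Finset (Fin n) => Even t.card),
        (2:ℂ) • kron (mix t))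
      ≤ ∑ t ∈ Finset.univ.filter (fun t : Finset (Fin n) => Even t.card),
          2 * ((∏ r ∈ t, opNorm (c r)) * ∏ r ∈ tᶜ, opNorm (s r)) := by
    refine le_trans (opNorm_sum_le _ _) (Finset.sum_le_sum fun t _ => ?_)
    rw [opNorm_smul]
    have hn2 : ‖(2:ℂ)‖ = 2 := by simp
    rw [hn2, ← mixnorm t]
    exact mul_le_mul_of_nonneg_left (opNorm_kron_le _) (by norm_num)
  have hnn : ‖((2:ℂ)^n)⁻¹‖ = ((2:ℝ)^n)⁻¹ := by
    simp [norm_inv, norm_pow]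
  have hzp : (2:ℝ) ^ ((1:ℤ) - n) = ((2:ℝ)^n)⁻¹ * 2 := by
    rw [zpow_sub₀ (two_ne_zero), zpow_one, zpow_natCast, div_eq_mul_inv]
    ring
  calc ‖((2:ℂ)^n)⁻¹‖ * opNorm (∑ t ∈ Finset.univ.filter
          (fun t : Finset (Fin n) => Even t.card), (2:ℂ) • kron (mix t))
      ≤ ((2:ℝ)^n)⁻¹ * ∑ t ∈ Finset.univ.filter (fun t : Finset (Fin n) => Even t.card),
          2 * ((∏ r ∈ t, opNorm (c r)) * ∏ r ∈ tᶜ, opNorm (s r)) := by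
        rw [hnn]
        exact mul_le_mul_of_nonneg_left step (by positivity)
  _ = phi a i j := by
        rw [phi, hzp, Finset.mul_sum, Finset.mul_sum]
        refine Finset.sum_congr rfl fun t _ => ?_
        rw [hc, hs, hp, hq]
        ring

lemma sum_pair_split {M : Type*} [AddCommMonoid M] {m : ℕ} (f : Fin m → Fin m → M) :
    ∑ i, ∑ j, f i j
      = (∑ i, f i i) + ∑ i, ∑ j ∈ Finset.univ.filter (fun j => i < j), (f i j + f j i) := by
  classical
  set T : Finset (Fin m × Fin m) := Finset.univ ×ˢ Finset.univ with hT
  have h0 : ∑ i, ∑ j, f i j = ∑ p ∈ T, f p.1 p.2 := (Finset.sum_product' _ _ f).symm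
  have hsplit : ∑ p ∈ T, f p.1 p.2
      = ∑ p ∈ T.filter (fun p => p.1 = p.2), f p.1 p.2
        + ∑ p ∈ T.filter (fun p => ¬ p.1 = p.2), f p.1 p.2 :=
    (Finset.sum_filter_add_sum_filter_not T _ _).symm
  have hdiag : ∑ p ∈ T.filter (fun p => p.1 = p.2), f p.1 p.2 = ∑ i, f i i := by
    rw [Finset.sum_finset_product' _ Finset.univ (fun i => {i})
      (by intro p; simp [hT, eq_comm])]
    simp
  have hoff : ∑ p ∈ T.filter (fun p => ¬ p.1 = p.2), f p.1 p.2
      = ∑ p ∈ T.filter (fun p => p.1 < p.2), f p.1 p.2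
        + ∑ p ∈ T.filter (fun p => p.2 < p.1), f p.1 p.2 := by
    rw [← Finset.sum_filter_add_sum_filter_not (T.filter (fun p => ¬ p.1 = p.2))
      (fun p => p.1 < p.2)]
    congr 1
    · congr 1
      rw [Finset.filter_filter]
      exact Finset.filter_congr fun p _ => ⟨fun h => h.2, fun h => ⟨ne_of_lt h, h⟩⟩
    · congr 1
      rw [Finset.filter_filter]
      refine Finset.filter_congr fun p _ => ⟨fun h => lt_of_le_of_ne (not_lt.mp h.2)
        (fun e => h.1 e.symm), fun h => ⟨h.ne', not_lt.mpr (le_of_lt h)⟩⟩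
  have hswap : ∑ p ∈ T.filter (fun p => p.2 < p.1), f p.1 p.2
      = ∑ p ∈ T.filter (fun p => p.1 < p.2), f p.2 p.1 := by
    refine Finset.sum_nbij' (fun p => Prod.swap p) (fun p => Prod.swap p) ?_ ?_ ?_ ?_ ?_ <;>
      simp [hT]
  have hlt : ∑ p ∈ T.filter (fun p => p.1 < p.2), (f p.1 p.2 + f p.2 p.1)
      = ∑ i, ∑ j ∈ Finset.univ.filter (fun j => i < j), (f i j + f j i) := by
    exact Finset.sum_finset_product' _ Finset.univ
      (fun i => Finset.univ.filter (fun j => i < j)) (by intro p; simp [hT])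
      (f := fun i j => f i j + f j i)
  rw [h0, hsplit, hdiag, hoff, hswap, ← Finset.sum_add_distrib, hlt]

end Aux


end Parity

open Parity in
/-- Proposition 2.1: multipartite parity norm bound. -/
theorem multipartite_parity_norm_bound
    {n m : ℕ} {d : Fin n → ℕ} (hn : 1 ≤ n) (hd : ∀ r, 1 ≤ d r) (hm : 1 ≤ m)
    (a : ∀ r : Fin n, Fin m → Matrix (Fin (d r)) (Fin (d r)) ℂ)
    (ha_sa : ∀ r i, (a r i).IsHermitian)
    (ha_norm : ∀ r i, opNorm (a r i) ≤ 1) :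
    opNorm (∑ i : Fin m, kron (fun r => a r i)) ^ 2 ≤
      m + ∑ i : Fin m, ∑ j ∈ Finset.univ.filter (fun j => i < j), phi a i j := by
  classical
  set A : Fin m → Matrix (∀ r, Fin (d r)) (∀ r, Fin (d r)) ℂ :=
    fun i => kron (fun r => a r i) with hA
  have hAH : ∀ i, (A i).conjTranspose = A i := by
    intro i
    have h : (fun r => (a r i).conjTranspose) = fun r => a r i := funext fun r => ha_sa r i
    rw [hA]
    rw [kron_conjTranspose, h]
  have hB : (∑ i, A i).conjTranspose = ∑ i, A i := by
    rw [Matrix.conjTranspose_sum]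
    exact Finset.sum_congr rfl fun i _ => hAH i
  rw [← opNorm_mul_self _ hB, Finset.sum_mul_sum, sum_pair_split (fun i j => A i * A j)]
  refine le_trans (opNorm_add_le _ _) (add_le_add ?_ ?_)
  · refine le_trans (opNorm_sum_le _ _) ?_
    have hterm : ∀ i, opNorm (A i * A i) ≤ 1 := by
      intro i
      have h1 : opNorm (A i) ≤ 1 :=
        le_trans (opNorm_kron_le _)
          (Finset.prod_le_one (fun r _ => opNorm_nonneg _) (fun r _ => ha_norm r i))
      have h0 := opNorm_nonneg (A i)
      refine le_trans (opNorm_mul_le _ _) ?_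
      nlinarith
    calc ∑ i, opNorm (A i * A i) ≤ ∑ _i : Fin m, (1:ℝ) :=
          Finset.sum_le_sum fun i _ => hterm i
    _ = m := by simp
  · refine le_trans (opNorm_sum_le _ _) (Finset.sum_le_sum fun i _ => ?_)
    refine le_trans (opNorm_sum_le _ _) (Finset.sum_le_sum fun j _ => ?_)
    have e1 : A i * A j = kron (fun r => a r i * a r j) := kron_mul _ _
    have e2 : A j * A i = kron (fun r => a r j * a r i) := kron_mul _ _
    rw [e1, e2]
    exact pair_bound a i j
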